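/- If the forward process is Markov, i.e., the conditional law p(x_t | x_{t-Δt}, x_0) does not depend on x_0, then within the DDIM family (γ_t² + λ_t² = σ_{t-Δt}²) one must have γ_t = μ_t σ_{t-Δt}² / (μ_{t-Δt} σ_t), and hence λ_t² = (σ_{t-Δt}²/σ_t²)(σ_t² - (μ_t²/μ_{t-Δt}²) σ_{t-Δt}²). -/

import Mathlib

open Real

/-- One-dimensional Gaussian probability density with mean `m` and variance `v`. -/
noncomputable def gpdf (m v x : ℝ) : ℝ :=
  (Real.sqrt (2 * π * v))⁻¹ * Real.exp (-(x - m) ^ 2 / (2 * v))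

/-- If the forward process is Markov — i.e. the forward conditional
`p(x_t | x_{t-Δt}, x_0)` equals some Gaussian `N(m(x_{t-Δt}), v)` not depending on `x_0` —
then within the DDIM family (`γ² + λ² = σ_{t-Δt}²`, reverse kernel
`N(μ_{t-Δt} x_0 + γ(x_t - μ_t x_0)/σ_t, λ²)`, forward marginals `N(μ_r x_0, σ_r²)`)
one must have `γ = μ_t σ_{t-Δt}²/(μ_{t-Δt} σ_t)` and hence
`λ² = (σ_{t-Δt}²/σ_t²)(σ_t² - (μ_t²/μ_{t-Δt}²) σ_{t-Δt}²)`.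
Here `μs, σs` denote `μ_{t-Δt}, σ_{t-Δt}`, and the Bayes identity
`p(x_{t-Δt}|x_t,x_0) p(x_t|x_0) = p(x_t|x_{t-Δt},x_0) p(x_{t-Δt}|x_0)` encodes
the joint Gaussian structure. -/
theorem markov_forces_ddpm_gamma
    (μs μt σs σt γ lam : ℝ)
    (hμs : 0 < μs) (hμt : 0 < μt) (hσs : 0 < σs) (hσt : 0 < σt)
    (hγ0 : 0 ≤ γ) (hlam : 0 < lam)
    (hsum : γ ^ 2 + lam ^ 2 = σs ^ 2)
    (m : ℝ → ℝ) (v : ℝ) (hv : 0 < v)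
    (hmarkov : ∀ x0 xs xt : ℝ,
      gpdf (μs * x0 + γ * (xt - μt * x0) / σt) (lam ^ 2) xs
          * gpdf (μt * x0) (σt ^ 2) xt
        = gpdf (m xs) v xt * gpdf (μs * x0) (σs ^ 2) xs) :
    γ = μt * σs ^ 2 / (μs * σt) ∧
    lam ^ 2 = σs ^ 2 / σt ^ 2 * (σt ^ 2 - μt ^ 2 / μs ^ 2 * σs ^ 2) := by
  have hln : lam ^ 2 ≠ 0 := by positivity
  have htn : (σt:ℝ) ≠ 0 := hσt.ne'
  have hsn : (σs:ℝ) ≠ 0 := hσs.ne'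
  have key : ∀ x0 xs xt : ℝ,
      -(xs - (μs * x0 + γ * (xt - μt * x0) / σt)) ^ 2 / (2 * lam ^ 2)
        + (-(xt - μt * x0) ^ 2 / (2 * σt ^ 2)
        + -(xs - μs * 0) ^ 2 / (2 * σs ^ 2))
      = -(xs - (μs * 0 + γ * (xt - μt * 0) / σt)) ^ 2 / (2 * lam ^ 2)
        + (-(xt - μt * 0) ^ 2 / (2 * σt ^ 2)
        + -(xs - μs * x0) ^ 2 / (2 * σs ^ 2)) := by
    intro x0 xs xt
    have h1 := hmarkov x0 xs xt
    have h0 := hmarkov 0 xs xt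
    have hstep : gpdf (μs * x0 + γ * (xt - μt * x0) / σt) (lam ^ 2) xs
          * gpdf (μt * x0) (σt ^ 2) xt * gpdf (μs * 0) (σs ^ 2) xs
        = gpdf (μs * 0 + γ * (xt - μt * 0) / σt) (lam ^ 2) xs
          * gpdf (μt * 0) (σt ^ 2) xt * gpdf (μs * x0) (σs ^ 2) xs := by
      calc gpdf (μs * x0 + γ * (xt - μt * x0) / σt) (lam ^ 2) xs
          * gpdf (μt * x0) (σt ^ 2) xt * gpdf (μs * 0) (σs ^ 2) xs
          = (gpdf (m xs) v xt * gpdf (μs * x0) (σs ^ 2) xs) * gpdf (μs * 0) (σs ^ 2) xs := by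
            rw [h1]
        _ = (gpdf (m xs) v xt * gpdf (μs * 0) (σs ^ 2) xs) * gpdf (μs * x0) (σs ^ 2) xs := by
            ring
        _ = gpdf (μs * 0 + γ * (xt - μt * 0) / σt) (lam ^ 2) xs
          * gpdf (μt * 0) (σt ^ 2) xt * gpdf (μs * x0) (σs ^ 2) xs := by rw [h0]
    simp only [gpdf] at hstep
    have hK : (0:ℝ) < (Real.sqrt (2 * π * lam ^ 2))⁻¹ *
        ((Real.sqrt (2 * π * σt ^ 2))⁻¹ * (Real.sqrt (2 * π * σs ^ 2))⁻¹) := by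
      have hpi := Real.pi_pos
      positivity
    apply Real.exp_injective
    apply mul_left_cancel₀ hK.ne'
    rw [Real.exp_add, Real.exp_add, Real.exp_add, Real.exp_add]
    linear_combination hstep
  have h1 := key 1 1 0
  have h2 := key 1 (-1) 0
  have h3 := key 1 0 1
  field_simp at h1 h2 h3
  have hmain : 64*σt^6*lam^2*σs^2*(γ*μs*σt*lam^2 - μt*σs^2*lam^2) = 0 := by
    linear_combination (16*σt^5*σs^2*lam^2*(σt-γ))*h1 + (16*σt^5*σs^2*lam^2*(σt+γ))*h2 + (-32*σt^6*σs^2*lam^2)*h3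
  have hX : γ*μs*σt = μt*σs^2 := by
    have hfac : (64*σt^6*lam^2*σs^2*lam^2) * (γ*μs*σt - μt*σs^2) = 0 := by
      linear_combination hmain
    rcases mul_eq_zero.mp hfac with h | h
    · exfalso; have : (0:ℝ) < 64*σt^6*lam^2*σs^2*lam^2 := by positivity
      linarith
    · linarith
  constructor
  · field_simp
    linear_combination hX
  · have hμsn : (μs:ℝ) ≠ 0 := hμs.ne'
    field_simp
    linear_combination (μs^2*σt^2)*hsum + (-(γ*μs*σt + μt*σs^2))*hX
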